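/- (TULES-NL implies UES-TL.) Consider the C² system ė = F(e,z), ż = G(e,z) with e ∈ ℝ^{n_e}, z ∈ ℝ^{n_z}, assumed forward complete. Assume TULES-NL: there exist r > 0, k > 0, λ > 0 such that every solution t ↦ (e(t), z(t)) on [0,∞) with |e(0)| ≤ r satisfies |e(t)| ≤ k |e(0)| e^{−λt} for all t ≥ 0. Assume further there exists c > 0 such that |∂F/∂e(0,z)| ≤ c and |∂G/∂z(0,z)| ≤ c for all z ∈ ℝ^{n_z}, and |∂²F/∂e∂e(e,z)| ≤ c, |∂²F/∂z∂e(e,z)| ≤ c, |∂G/∂e(e,z)| ≤ c for all z ∈ ℝ^{n_z} and all e with |e| ≤ k r. Then UES-TL holds: the system ẋ̂ = G(0, x̂) is forward complete, and there exist k̃ > 0, λ̃ > 0 such that every differentiable curve (ẽ, x̂) : [0,∞) → ℝ^{n_e} × ℝ^{n_z} satisfying ẽ'(t) = ∂F/∂e(0, x̂(t)) ẽ(t) and x̂'(t) = G(0, x̂(t)) satisfies |ẽ(t)| ≤ k̃ e^{−λ̃ t} |ẽ(0)| for all t ≥ 0. -/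

import Mathlib

open Set
set_option maxHeartbeats 1000000


open scoped BigOperators

/-- Partial Jacobian `∂F/∂e(0,z)` of `F : ℝ^{n_e} × ℝ^{n_z} → ℝ^{n_e}`. -/
noncomputable def stmt16Fe (ne nz : ℕ)
    (F : EuclideanSpace ℝ (Fin ne) × EuclideanSpace ℝ (Fin nz) → EuclideanSpace ℝ (Fin ne))
    (z : EuclideanSpace ℝ (Fin nz)) : Matrix (Fin ne) (Fin ne) ℝ :=
  Matrix.of fun i j => fderiv ℝ (fun e => F (e, z)) 0 (EuclideanSpace.single j 1) i


private lemma s16_sum_apply {n m : ℕ} (f : Fin n → EuclideanSpace ℝ (Fin m)) (i : Fin m) :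
    (∑ j, f j) i = ∑ j, f j i := by
  rw [WithLp.ofLp_sum]; exact Finset.sum_apply i Finset.univ _

private noncomputable def s16Fe {ne nz : ℕ}
    (F : EuclideanSpace ℝ (Fin ne) × EuclideanSpace ℝ (Fin nz) → EuclideanSpace ℝ (Fin ne))
    (z : EuclideanSpace ℝ (Fin nz)) :
    EuclideanSpace ℝ (Fin ne) →L[ℝ] EuclideanSpace ℝ (Fin ne) :=
  fderiv ℝ (fun e => F (e, z)) 0

private lemma s16_mulVec {n : ℕ} (L : EuclideanSpace ℝ (Fin n) →L[ℝ] EuclideanSpace ℝ (Fin n))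
    (v : EuclideanSpace ℝ (Fin n)) :
    (WithLp.equiv 2 (Fin n → ℝ)).symm
      ((Matrix.of fun i j => L (EuclideanSpace.single j 1) i).mulVec v) = L v := by
  have hv : v = ∑ j, v j • EuclideanSpace.single j 1 := by
    ext i
    rw [s16_sum_apply]
    simp [EuclideanSpace.single_apply]
  ext i
  rw [WithLp.equiv_symm_apply, PiLp.toLp_apply, Matrix.mulVec]
  conv_rhs => rw [hv, map_sum, s16_sum_apply]
  simp [dotProduct, mul_comm]

section helpers

variable {ne nz : ℕ}
  {F : EuclideanSpace ℝ (Fin ne) × EuclideanSpace ℝ (Fin nz) → EuclideanSpace ℝ (Fin ne)}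

private lemma s16_hasFDeriv_sec1 (hFd : Differentiable ℝ F)
    (x : EuclideanSpace ℝ (Fin ne)) (z : EuclideanSpace ℝ (Fin nz)) :
    HasFDerivAt (fun e' => F (e', z))
      ((fderiv ℝ F (x, z)).comp (ContinuousLinearMap.inl ℝ _ _)) x :=
  ((hFd (x, z)).hasFDerivAt).comp x (hasFDerivAt_prodMk_left x z)

private lemma s16_diff_jac1 (hF : ContDiff ℝ 2 F) (z : EuclideanSpace ℝ (Fin nz)) :
    Differentiable ℝ (fun x => fderiv ℝ (fun e' => F (e', z)) x) := by
  have hFd : Differentiable ℝ F := hF.differentiable (by norm_num)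
  have heq : (fun x => fderiv ℝ (fun e' => F (e', z)) x) =
      fun x => ((ContinuousLinearMap.compL ℝ (EuclideanSpace ℝ (Fin ne))
          (EuclideanSpace ℝ (Fin ne) × EuclideanSpace ℝ (Fin nz))
          (EuclideanSpace ℝ (Fin ne))).flip
          (ContinuousLinearMap.inl ℝ _ _)) (fderiv ℝ F (x, z)) := by
    funext x
    exact (s16_hasFDeriv_sec1 hFd x z).fderiv
  rw [heq]
  exact (ContinuousLinearMap.differentiable _).comp
    (((hF.fderiv_right (m := 1) (by norm_num)).differentiable one_ne_zero).comp
      (differentiable_id.prodMk (differentiable_const z)))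

private lemma s16_diff_jac2 (hF : ContDiff ℝ 2 F) (e : EuclideanSpace ℝ (Fin ne)) :
    Differentiable ℝ (fun z' => fderiv ℝ (fun e' => F (e', z')) e) := by
  have hFd : Differentiable ℝ F := hF.differentiable (by norm_num)
  have heq : (fun z' => fderiv ℝ (fun e' => F (e', z')) e) =
      fun z' => ((ContinuousLinearMap.compL ℝ (EuclideanSpace ℝ (Fin ne))
          (EuclideanSpace ℝ (Fin ne) × EuclideanSpace ℝ (Fin nz))
          (EuclideanSpace ℝ (Fin ne))).flip
          (ContinuousLinearMap.inl ℝ _ _)) (fderiv ℝ F (e, z')) := by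
    funext z'
    exact (s16_hasFDeriv_sec1 hFd e z').fderiv
  rw [heq]
  exact (ContinuousLinearMap.differentiable _).comp
    (((hF.fderiv_right (m := 1) (by norm_num)).differentiable one_ne_zero).comp
      ((differentiable_const e).prodMk differentiable_id))

end helpers

/-- (Proposition 1 of [AJP]: TULES-NL implies UES-TL.)  If the manifold
`e = 0` is transversally uniformly locally exponentially stable for `ė = F(e,z)`,
`ż = G(e,z)` (forward complete), and the indicated derivative bounds hold, then the
transversally linear system `ẽ' = ∂F/∂e(0,x̂) ẽ`, `x̂' = G(0,x̂)` is uniformly exponentially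
stable and `ẋ̂ = G(0,x̂)` is forward complete. -/
theorem stmt16_TULES_implies_UESTL (ne nz : ℕ)
    (F : EuclideanSpace ℝ (Fin ne) × EuclideanSpace ℝ (Fin nz) → EuclideanSpace ℝ (Fin ne))
    (G : EuclideanSpace ℝ (Fin ne) × EuclideanSpace ℝ (Fin nz) → EuclideanSpace ℝ (Fin nz))
    (hF : ContDiff ℝ 2 F) (hG : ContDiff ℝ 2 G)
    (hcomplete : ∀ e0 z0,
      ∃ (e : ℝ → EuclideanSpace ℝ (Fin ne)) (z : ℝ → EuclideanSpace ℝ (Fin nz)),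
        e 0 = e0 ∧ z 0 = z0 ∧
          ∀ t : ℝ, 0 ≤ t →
            HasDerivAt e (F (e t, z t)) t ∧ HasDerivAt z (G (e t, z t)) t)
    (r k lam : ℝ) (hr : 0 < r) (hk : 0 < k) (hlam : 0 < lam)
    (hTULES : ∀ (e : ℝ → EuclideanSpace ℝ (Fin ne)) (z : ℝ → EuclideanSpace ℝ (Fin nz)),
      (∀ t : ℝ, 0 ≤ t → HasDerivAt e (F (e t, z t)) t ∧ HasDerivAt z (G (e t, z t)) t) →
      ‖e 0‖ ≤ r → ∀ t : ℝ, 0 ≤ t → ‖e t‖ ≤ k * ‖e 0‖ * Real.exp (-lam * t))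
    (c : ℝ) (hc : 0 < c)
    (hbnd1 : ∀ z : EuclideanSpace ℝ (Fin nz),
      ‖fderiv ℝ (fun e => F (e, z)) 0‖ ≤ c ∧ ‖fderiv ℝ (fun z' => G (0, z')) z‖ ≤ c)
    (hbnd2 : ∀ (z : EuclideanSpace ℝ (Fin nz)) (e : EuclideanSpace ℝ (Fin ne)), ‖e‖ ≤ k * r →
      ‖fderiv ℝ (fun e' => fderiv ℝ (fun e'' => F (e'', z)) e') e‖ ≤ c ∧
      ‖fderiv ℝ (fun z' => fderiv ℝ (fun e' => F (e', z')) e) z‖ ≤ c ∧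
      ‖fderiv ℝ (fun e' => G (e', z)) e‖ ≤ c) :
    (∀ z0, ∃ zh : ℝ → EuclideanSpace ℝ (Fin nz),
        zh 0 = z0 ∧ ∀ t : ℝ, 0 ≤ t → HasDerivAt zh (G (0, zh t)) t) ∧
      ∃ kt > (0 : ℝ), ∃ lamt > (0 : ℝ),
        ∀ (et : ℝ → EuclideanSpace ℝ (Fin ne)) (zh : ℝ → EuclideanSpace ℝ (Fin nz)),
          (∀ t : ℝ, 0 ≤ t → HasDerivAt zh (G (0, zh t)) t) →
          (∀ t : ℝ, 0 ≤ t →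
              HasDerivAt et
                ((WithLp.equiv 2 (Fin ne → ℝ)).symm
                  ((stmt16Fe ne nz F (zh t)).mulVec (et t))) t) →
          ∀ t : ℝ, 0 ≤ t → ‖et t‖ ≤ kt * Real.exp (-lamt * t) * ‖et 0‖ := by
  have hFd : Differentiable ℝ F := hF.differentiable (by norm_num)
  have hGd : Differentiable ℝ G := hG.differentiable (by norm_num)
  have hkr : (0:ℝ) ≤ k * r := by positivity
  have hzero : ∀ z0 : EuclideanSpace ℝ (Fin nz),
      ∃ (e : ℝ → EuclideanSpace ℝ (Fin ne)) (z : ℝ → EuclideanSpace ℝ (Fin nz)),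
        e 0 = 0 ∧ z 0 = z0 ∧ (∀ t, 0 ≤ t → e t = 0) ∧
        (∀ t : ℝ, 0 ≤ t → HasDerivAt e (F (e t, z t)) t ∧ HasDerivAt z (G (e t, z t)) t) := by
    intro z0
    obtain ⟨e, z, he0, hz0, hsol⟩ := hcomplete 0 z0
    refine ⟨e, z, he0, hz0, fun t ht => ?_, hsol⟩
    have h1 := hTULES e z hsol (by rw [he0]; simpa using hr.le) t ht
    rw [he0] at h1
    simp only [norm_zero, mul_zero, zero_mul] at h1
    exact norm_le_zero_iff.mp h1
  have hF0 : ∀ z0 : EuclideanSpace ℝ (Fin nz), F (0, z0) = 0 := by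
    intro z0
    obtain ⟨e, z, he0, hz0, hez, hsol⟩ := hzero z0
    have h1 : HasDerivWithinAt e (F (e 0, z 0)) (Ici 0) 0 :=
      ((hsol 0 le_rfl).1).hasDerivWithinAt
    have h2 : HasDerivWithinAt e 0 (Ici (0:ℝ)) 0 :=
      (hasDerivWithinAt_const (0:ℝ) (Ici (0:ℝ)) (0 : EuclideanSpace ℝ (Fin ne))).congr
        (fun y hy => hez y hy) (hez 0 le_rfl)
    have := UniqueDiffWithinAt.eq_deriv _ ((uniqueDiffOn_Ici (0:ℝ)) 0 self_mem_Ici) h1 h2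
    rwa [he0, hz0] at this
  have jac1 : ∀ z : EuclideanSpace ℝ (Fin nz),
      Differentiable ℝ (fun x => fderiv ℝ (fun e' => F (e', z)) x) :=
    fun z => s16_diff_jac1 hF z
  have jac2 : ∀ e : EuclideanSpace ℝ (Fin ne),
      Differentiable ℝ (fun z' => fderiv ℝ (fun e' => F (e', z')) e) :=
    fun e => s16_diff_jac2 hF e
  have hFe0n : ∀ z : EuclideanSpace ℝ (Fin nz), ‖s16Fe F z‖ ≤ c := fun z => (hbnd1 z).1
  have hGe : ∀ (z : EuclideanSpace ℝ (Fin nz)) (e : EuclideanSpace ℝ (Fin ne)), ‖e‖ ≤ k*r →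
      ‖G (e, z) - G (0, z)‖ ≤ c * ‖e‖ := by
    intro z e he
    have := Convex.norm_image_sub_le_of_norm_fderiv_le
      (f := fun e' => G (e', z)) (s := Metric.closedBall 0 (k*r)) (x := (0:EuclideanSpace ℝ (Fin ne))) (y := e)
      (fun x _ => (hGd (x, z)).comp x (differentiableAt_id.prodMk (differentiableAt_const z)))
      (fun x hx => (hbnd2 z x (by rwa [Metric.mem_closedBall, dist_zero_right] at hx)).2.2)
      (convex_closedBall _ _)
      (by rw [Metric.mem_closedBall, dist_zero_right, norm_zero]; exact hkr)
      (by rwa [Metric.mem_closedBall, dist_zero_right])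
    rwa [sub_zero] at this
  have hGz : ∀ z z' : EuclideanSpace ℝ (Fin nz), ‖G (0, z) - G (0, z')‖ ≤ c * ‖z - z'‖ := by
    intro z z'
    exact Convex.norm_image_sub_le_of_norm_fderiv_le
      (f := fun z'' => G (0, z'')) (s := univ) (x := z') (y := z)
      (fun x _ => (hGd ((0 : EuclideanSpace ℝ (Fin ne)), x)).comp x
        ((differentiableAt_const _).prodMk differentiableAt_id))
      (fun x _ => (hbnd1 x).2) convex_univ (mem_univ z') (mem_univ z)
  have hFez : ∀ z z' : EuclideanSpace ℝ (Fin nz), ‖s16Fe F z - s16Fe F z'‖ ≤ c * ‖z - z'‖ := by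
    intro z z'
    exact Convex.norm_image_sub_le_of_norm_fderiv_le
      (f := fun z'' => fderiv ℝ (fun e' => F (e', z'')) 0) (s := univ) (x := z') (y := z)
      (fun x _ => jac2 0 x)
      (fun x _ => (hbnd2 x 0 (by rw [norm_zero]; exact hkr)).2.1)
      convex_univ (mem_univ z') (mem_univ z)
  have hFee : ∀ (z : EuclideanSpace ℝ (Fin nz)) (x : EuclideanSpace ℝ (Fin ne)), ‖x‖ ≤ k*r →
      ‖fderiv ℝ (fun e' => F (e', z)) x - s16Fe F z‖ ≤ c * ‖x‖ := by
    intro z x hx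
    have := Convex.norm_image_sub_le_of_norm_fderiv_le
      (f := fun x' => fderiv ℝ (fun e' => F (e', z)) x') (s := Metric.closedBall 0 (k*r))
      (x := (0:EuclideanSpace ℝ (Fin ne))) (y := x)
      (fun y _ => jac1 z y)
      (fun y hy => (hbnd2 z y (by rwa [Metric.mem_closedBall, dist_zero_right] at hy)).1)
      (convex_closedBall _ _)
      (by rw [Metric.mem_closedBall, dist_zero_right, norm_zero]; exact hkr)
      (by rwa [Metric.mem_closedBall, dist_zero_right])
    rwa [sub_zero] at this
  have hTay : ∀ (z : EuclideanSpace ℝ (Fin nz)) (e : EuclideanSpace ℝ (Fin ne)), ‖e‖ ≤ k*r →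
      ‖F (e, z) - s16Fe F z e‖ ≤ c * ‖e‖ * ‖e‖ := by
    intro z e he
    have hh : ∀ x : EuclideanSpace ℝ (Fin ne),
        HasFDerivAt (fun y => F (y, z) - s16Fe F z y)
          (fderiv ℝ (fun e' => F (e', z)) x - s16Fe F z) x := by
      intro x
      have hd : DifferentiableAt ℝ (fun e' => F (e', z)) x :=
        (hFd (x, z)).comp x (differentiableAt_id.prodMk (differentiableAt_const z))
      exact hd.hasFDerivAt.sub ((s16Fe F z).hasFDerivAt)
    have := Convex.norm_image_sub_le_of_norm_fderiv_le
      (f := fun y => F (y, z) - s16Fe F z y) (s := Metric.closedBall 0 ‖e‖)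
      (x := (0:EuclideanSpace ℝ (Fin ne))) (y := e)
      (fun x _ => (hh x).differentiableAt)
      (fun x hx => by
        rw [(hh x).fderiv]
        have hxe : ‖x‖ ≤ ‖e‖ := by rwa [Metric.mem_closedBall, dist_zero_right] at hx
        calc ‖fderiv ℝ (fun e' => F (e', z)) x - s16Fe F z‖ ≤ c * ‖x‖ :=
              hFee z x (le_trans hxe he)
          _ ≤ c * ‖e‖ := by nlinarith)
      (convex_closedBall _ _)
      (by rw [Metric.mem_closedBall, dist_zero_right, norm_zero]; exact norm_nonneg e)
      (by rw [Metric.mem_closedBall, dist_zero_right])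
    simp only [hF0 z, map_zero, sub_self, sub_zero] at this
    exact this
  constructor
  · intro z0
    obtain ⟨e, z, he0, hz0, hez, hsol⟩ := hzero z0
    refine ⟨z, hz0, fun t ht => ?_⟩
    have := (hsol t ht).2
    rwa [hez t ht] at this
  · refine ⟨k, hk, lam, hlam, ?_⟩
    intro et zh hzh het' T hT
    have hmat : ∀ (z : EuclideanSpace ℝ (Fin nz)) (v : EuclideanSpace ℝ (Fin ne)),
        (WithLp.equiv 2 (Fin ne → ℝ)).symm ((stmt16Fe ne nz F z).mulVec v) = s16Fe F z v :=
      fun z v => s16_mulVec (s16Fe F z) v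
    have het : ∀ t : ℝ, 0 ≤ t → HasDerivAt et (s16Fe F (zh t) (et t)) t := by
      intro t ht
      have h := het' t ht
      rwa [hmat] at h
    have hetc : ContinuousOn et (Icc 0 T) := fun t ht =>
      ((het t ht.1).continuousAt).continuousWithinAt
    by_cases hu0 : et 0 = 0
    · -- zero initial condition
      have hb := norm_le_gronwallBound_of_norm_deriv_right_le (δ := 0) (K := c) (ε := 0)
        (a := 0) (b := T) hetc
        (fun t ht => (het t ht.1).hasDerivWithinAt)
        (by rw [hu0]; simp)
        (fun t ht => by
          have h1 := (s16Fe F (zh t)).le_opNorm (et t)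
          have h2 := hFe0n (zh t)
          have h3 := norm_nonneg (et t)
          calc ‖s16Fe F (zh t) (et t)‖ ≤ ‖s16Fe F (zh t)‖ * ‖et t‖ := h1
            _ ≤ c * ‖et t‖ + 0 := by nlinarith)
        T ⟨hT, le_rfl⟩
      rw [gronwallBound_of_K_ne_0 hc.ne'] at hb
      simp only [zero_mul, zero_add, zero_div, zero_mul] at hb
      have : ‖et T‖ ≤ 0 := by simpa using hb
      rw [hu0]
      simp only [norm_zero, mul_zero]
      exact le_trans this (le_refl 0)
    · have hρ : 0 < ‖et 0‖ := norm_pos_iff.mpr hu0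
      refine le_of_forall_pos_le_add ?_
      intro δ hδ
      set u := et 0 with hu
      set C2 : ℝ := k^2*‖u‖^2*(1+Real.exp (c*T))*Real.exp (c*T) with hC2
      have hC2pos : 0 < C2 := by
        have h1 : (0:ℝ) < ‖u‖^2 := pow_pos hρ 2
        have h2 : (0:ℝ) < 1 + Real.exp (c*T) := by positivity
        have h3 : (0:ℝ) < Real.exp (c*T) := Real.exp_pos _
        rw [hC2]; positivity
      set ε : ℝ := min (r/‖u‖) (δ/C2) with hε
      have hεpos : 0 < ε := lt_min (div_pos hr hρ) (div_pos hδ hC2pos)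
      have hεu : ε * ‖u‖ ≤ r := by
        calc ε * ‖u‖ ≤ (r/‖u‖) * ‖u‖ := by
              have := min_le_left (r/‖u‖) (δ/C2); gcongr
          _ = r := div_mul_cancel₀ r hρ.ne'
      obtain ⟨e, z, he0, hz0, hsol⟩ := hcomplete (ε • u) (zh 0)
      have he0n : ‖e 0‖ = ε * ‖u‖ := by
        rw [he0, norm_smul, Real.norm_eq_abs, abs_of_pos hεpos]
      have hTe : ∀ t, 0 ≤ t → ‖e t‖ ≤ k * (ε*‖u‖) * Real.exp (-lam*t) := by
        intro t ht
        have := hTULES e z hsol (by rw [he0n]; exact hεu) t ht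
        rwa [he0n] at this
      have heB : ∀ t, 0 ≤ t → ‖e t‖ ≤ k * (ε*‖u‖) := by
        intro t ht
        have h1 := hTe t ht
        have h2 : Real.exp (-lam*t) ≤ 1 := Real.exp_le_one_iff.mpr (by nlinarith)
        have h3 : (0:ℝ) ≤ k*(ε*‖u‖) := by positivity
        calc ‖e t‖ ≤ k * (ε*‖u‖) * Real.exp (-lam*t) := h1
          _ ≤ k * (ε*‖u‖) * 1 := mul_le_mul_of_nonneg_left h2 h3
          _ = k * (ε*‖u‖) := mul_one _
      have hekr : ∀ t, 0 ≤ t → ‖e t‖ ≤ k * r := by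
        intro t ht
        calc ‖e t‖ ≤ k*(ε*‖u‖) := heB t ht
          _ ≤ k * r := by nlinarith
      -- Gronwall for z - zh
      have hdB : ∀ t ∈ Icc (0:ℝ) T, ‖z t - zh t‖ ≤ k*ε*‖u‖*Real.exp (c*T) := by
        have hb := norm_le_gronwallBound_of_norm_deriv_right_le
          (f := fun t => z t - zh t) (f' := fun t => G (e t, z t) - G (0, zh t))
          (δ := 0) (K := c) (ε := c*(k*(ε*‖u‖))) (a := 0) (b := T)
          (fun t ht => ((((hsol t ht.1).2).sub (hzh t ht.1)).continuousAt).continuousWithinAt)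
          (fun t ht => (((hsol t ht.1).2).sub (hzh t ht.1)).hasDerivWithinAt)
          (by show ‖z 0 - zh 0‖ ≤ 0; rw [hz0]; simp)
          (fun t ht => by
            show ‖G (e t, z t) - G (0, zh t)‖ ≤ c * ‖z t - zh t‖ + c*(k*(ε*‖u‖))
            have key : G (e t, z t) - G (0, zh t)
                = (G (e t, z t) - G (0, z t)) + (G (0, z t) - G (0, zh t)) := by abel
            rw [key]
            calc ‖(G (e t, z t) - G (0, z t)) + (G (0, z t) - G (0, zh t))‖
                ≤ ‖G (e t, z t) - G (0, z t)‖ + ‖G (0, z t) - G (0, zh t)‖ := norm_add_le _ _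
              _ ≤ c * ‖e t‖ + c * ‖z t - zh t‖ :=
                  add_le_add (hGe _ _ (hekr t ht.1)) (hGz _ _)
              _ ≤ c * ‖z t - zh t‖ + c*(k*(ε*‖u‖)) := by
                  have := heB t ht.1; nlinarith)
        intro t ht
        have h1 := hb t ht
        rw [gronwallBound_of_K_ne_0 hc.ne'] at h1
        have h2 : c*(k*(ε*‖u‖))/c = k*(ε*‖u‖) := by field_simp
        simp only [sub_zero, zero_mul, zero_add, h2] at h1
        have h3 : Real.exp (c*t) ≤ Real.exp (c*T) := by
          apply Real.exp_le_exp.mpr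
          have := ht.2; nlinarith
        have h5 : Real.exp (c*t) - 1 ≤ Real.exp (c*T) := by
          have := Real.exp_pos (c*T); nlinarith
        have h6 : (0:ℝ) ≤ k*(ε*‖u‖) := by positivity
        have h7 := mul_le_mul_of_nonneg_left h5 h6
        calc ‖z t - zh t‖ ≤ k*(ε*‖u‖) * (Real.exp (c*t) - 1) := h1
          _ ≤ k*(ε*‖u‖) * Real.exp (c*T) := h7
          _ = k*ε*‖u‖*Real.exp (c*T) := by ring
      -- Gronwall for w = e - ε • et
      have hwd : ∀ t, 0 ≤ t → HasDerivAt (fun s => e s - ε • et s)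
          (F (e t, z t) - ε • (s16Fe F (zh t) (et t))) t := by
        intro t ht
        exact ((hsol t ht).1).sub ((het t ht).const_smul ε)
      have hwB : ‖e T - ε • et T‖ ≤ ε^2 * C2 := by
        set Eb : ℝ := c*(k*(ε*‖u‖))*(k*(ε*‖u‖)) + c*(k*ε*‖u‖*Real.exp (c*T))*(k*(ε*‖u‖))
          with hEb
        have hb := norm_le_gronwallBound_of_norm_deriv_right_le
          (f := fun s => e s - ε • et s)
          (f' := fun t => F (e t, z t) - ε • (s16Fe F (zh t) (et t)))
          (δ := 0) (K := c) (ε := Eb) (a := 0) (b := T)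
          (fun t ht => ((hwd t ht.1).continuousAt).continuousWithinAt)
          (fun t ht => (hwd t ht.1).hasDerivWithinAt)
          (by show ‖e 0 - ε • et 0‖ ≤ 0; rw [he0, hu]; simp)
          (fun t ht => by
            show ‖F (e t, z t) - ε • (s16Fe F (zh t) (et t))‖ ≤ c * ‖e t - ε • et t‖ + Eb
            have key : F (e t, z t) - ε • (s16Fe F (zh t) (et t))
                = (F (e t, z t) - s16Fe F (z t) (e t))
                  + ((s16Fe F (z t)) (e t) - (s16Fe F (zh t)) (e t))
                  + (s16Fe F (zh t)) (e t - ε • et t) := by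
              rw [map_sub, map_smul]; abel
            rw [key]
            have hT1 : ‖F (e t, z t) - s16Fe F (z t) (e t)‖ ≤ c * ‖e t‖ * ‖e t‖ :=
              hTay _ _ (hekr t ht.1)
            have hT2 : ‖(s16Fe F (z t)) (e t) - (s16Fe F (zh t)) (e t)‖
                ≤ (c * ‖z t - zh t‖) * ‖e t‖ := by
              have h5 : (s16Fe F (z t)) (e t) - (s16Fe F (zh t)) (e t)
                  = (s16Fe F (z t) - s16Fe F (zh t)) (e t) := by
                rw [ContinuousLinearMap.sub_apply]
              rw [h5]
              calc ‖(s16Fe F (z t) - s16Fe F (zh t)) (e t)‖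
                  ≤ ‖s16Fe F (z t) - s16Fe F (zh t)‖ * ‖e t‖ :=
                    ContinuousLinearMap.le_opNorm _ _
                _ ≤ (c * ‖z t - zh t‖) * ‖e t‖ := by
                    have := hFez (z t) (zh t)
                    have := norm_nonneg (e t); nlinarith
            have hT3 : ‖(s16Fe F (zh t)) (e t - ε • et t)‖ ≤ c * ‖e t - ε • et t‖ := by
              calc ‖(s16Fe F (zh t)) (e t - ε • et t)‖
                  ≤ ‖s16Fe F (zh t)‖ * ‖e t - ε • et t‖ := ContinuousLinearMap.le_opNorm _ _
                _ ≤ c * ‖e t - ε • et t‖ := by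
                    have := hFe0n (zh t); have := norm_nonneg (e t - ε • et t); nlinarith
            have htri := norm_add₃_le (a := F (e t, z t) - s16Fe F (z t) (e t))
              (b := (s16Fe F (z t)) (e t) - (s16Fe F (zh t)) (e t))
              (c := (s16Fe F (zh t)) (e t - ε • et t))
            have heBt := heB t ht.1
            have hdBt := hdB t ⟨ht.1, ht.2.le⟩
            have hent := norm_nonneg (e t)
            have hzzt := norm_nonneg (z t - zh t)
            calc ‖F (e t, z t) - s16Fe F (z t) (e t)
                  + ((s16Fe F (z t)) (e t) - (s16Fe F (zh t)) (e t))
                  + (s16Fe F (zh t)) (e t - ε • et t)‖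
                ≤ ‖F (e t, z t) - s16Fe F (z t) (e t)‖
                  + ‖(s16Fe F (z t)) (e t) - (s16Fe F (zh t)) (e t)‖
                  + ‖(s16Fe F (zh t)) (e t - ε • et t)‖ := htri
              _ ≤ c * ‖e t‖ * ‖e t‖ + (c * ‖z t - zh t‖) * ‖e t‖ + c * ‖e t - ε • et t‖ := by
                  exact add_le_add (add_le_add hT1 hT2) hT3
              _ ≤ c * ‖e t - ε • et t‖ + Eb := by
                  have p1 : ‖e t‖ * ‖e t‖ ≤ (k*(ε*‖u‖))*(k*(ε*‖u‖)) :=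
                    mul_le_mul heBt heBt hent (by positivity)
                  have p2 : ‖z t - zh t‖ * ‖e t‖ ≤ (k*ε*‖u‖*Real.exp (c*T))*(k*(ε*‖u‖)) :=
                    mul_le_mul hdBt heBt hent (by positivity)
                  rw [hEb]
                  nlinarith [hc.le, p1, p2])
          T ⟨hT, le_rfl⟩
        rw [gronwallBound_of_K_ne_0 hc.ne'] at hb
        have hEbc : Eb / c = (k*(ε*‖u‖))*(k*(ε*‖u‖)) + (k*ε*‖u‖*Real.exp (c*T))*(k*(ε*‖u‖)) := by
          rw [hEb]; field_simp
        simp only [sub_zero, zero_mul, zero_add, hEbc] at hb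
        have hX : (0:ℝ) < Real.exp (c*T) := Real.exp_pos _
        have hA : (0:ℝ) ≤ (k*(ε*‖u‖))*(k*(ε*‖u‖)) + (k*ε*‖u‖*Real.exp (c*T))*(k*(ε*‖u‖)) := by positivity
        calc ‖e T - ε • et T‖
            ≤ ((k*(ε*‖u‖))*(k*(ε*‖u‖)) + (k*ε*‖u‖*Real.exp (c*T))*(k*(ε*‖u‖))) * (Real.exp (c*T) - 1) := hb
          _ ≤ ((k*(ε*‖u‖))*(k*(ε*‖u‖)) + (k*ε*‖u‖*Real.exp (c*T))*(k*(ε*‖u‖))) * Real.exp (c*T) := by nlinarith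
          _ = ε^2 * C2 := by rw [hC2]; ring
      -- conclude
      have hstep : ε * ‖et T‖ ≤ ε * (k*‖u‖*Real.exp (-lam*T) + ε*C2) := by
        have h1 : ε • et T = e T - (e T - ε • et T) := (sub_sub_cancel _ _).symm
        have h2 : ε * ‖et T‖ = ‖ε • et T‖ := by
          rw [norm_smul, Real.norm_eq_abs, abs_of_pos hεpos]
        calc ε * ‖et T‖ = ‖ε • et T‖ := h2
          _ ≤ ‖e T‖ + ‖e T - ε • et T‖ := by
              conv_lhs => rw [h1]
              exact norm_sub_le (e T) (e T - ε • et T)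
          _ ≤ k * (ε*‖u‖) * Real.exp (-lam*T) + ε^2*C2 := add_le_add (hTe T hT) hwB
          _ = ε * (k*‖u‖*Real.exp (-lam*T) + ε*C2) := by ring
      have hfin : ‖et T‖ ≤ k*‖u‖*Real.exp (-lam*T) + ε*C2 :=
        (mul_le_mul_iff_right₀ hεpos).mp hstep
      have hεC2 : ε*C2 ≤ δ := by
        calc ε*C2 ≤ (δ/C2)*C2 := by
              have := min_le_right (r/‖u‖) (δ/C2); gcongr
          _ = δ := div_mul_cancel₀ δ hC2pos.ne'
      calc ‖et T‖ ≤ k*‖u‖*Real.exp (-lam*T) + ε*C2 := hfin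
        _ ≤ k * Real.exp (-lam * T) * ‖et 0‖ + δ := by
            rw [← hu]; exact add_le_add (le_of_eq (by ring)) hεC2
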